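/- Let m, n ≥ 1 be integers, M = m + n, T ≥ 1, δ ∈ (0,1), β ∈ (0,1]^n with β_j·T ≥ 1 for every j and β_min = min_j β_j, and η = 1/(60·M·√(2·T·ln(T²/δ))). Let 𝒳 be a nonempty set containing a distinguished element ∅. For each t ∈ {1,…,T} let f_t : 𝒳 → [0,1], g_t : 𝒳 → [-1,1]^m, h_t : 𝒳 → [0,1]^n with f_t(∅) = 0, g_t(∅) = 0, h_t(∅) = 0, and let g̃_t : 𝒳 → ℝ^M be the unified constraint function whose first m coordinates are g_t and whose coordinate m+j equals h_{t,j} − β_j. Let ρ ∈ (0,1] and suppose there is a sequence x°_1, …, x°_T ∈ 𝒳 with g̃_{t,i}(x°_t) ≤ −ρ for every t and every coordinate i. Define the algorithm: λ_1 = 0 ∈ ℝ^M; at each round t, let x̂_t maximize f_t(x) − ⟨λ_t, g̃_t(x)⟩ over x ∈ 𝒳; set x_t = x̂_t if ∑_{s=1}^{t−1} h_{s,j}(x_s) ≤ β_j·T − 1 for every j ∈ {1,…,n}, and x_t = ∅ otherwise; update λ_{t+1,i} = max(0, λ_{t,i} + η·g̃_{t,i}(x_t)) for every coordinate i. Let α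 = ρ/(1 + ρ). Then for every sequence (z_1, …, z_T) ∈ 𝒳^T satisfying ∑_{t=1}^{T} g_{t,i}(z_t) ≤ 0 for all i ∈ {1,…,m} and ∑_{t=1}^{T} h_{t,j}(z_t) ≤ β_j·T for all j ∈ {1,…,n}, it holds that α·∑_{t=1}^{T} f_t(z_t) − ∑_{t=1}^{T} f_t(x_t) ≤ 1/β_min + (60·M·√(2·T·ln(T²/δ)))/(2·β_min²) + √T/(120·√(2·ln(T²/δ))). -/

import Mathlib

open Finset

lemma sq_max_zero_le (b v : ℝ) (hb : 0 ≤ b) : (max 0 v - b)^2 ≤ (v - b)^2 := by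
  rcases le_or_gt 0 v with hv | hv
  · rw [max_eq_right hv]
  · rw [max_eq_left hv.le]; nlinarith

lemma ogd_bound (M Tmax : ℕ) (η : ℝ) (hη : 0 < η)
    (lam : ℕ → Fin M → ℝ) (G : ℕ → Fin M → ℝ)
    (hlam1 : ∀ i, lam 1 i = 0)
    (hupd : ∀ t, 1 ≤ t → t ≤ Tmax → ∀ i, lam (t+1) i = max 0 (lam t i + η * G t i))
    (hG : ∀ t, 1 ≤ t → t ≤ Tmax → ∀ i, |G t i| ≤ 1)
    (ls : Fin M → ℝ) (hls : ∀ i, 0 ≤ ls i)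
    (S : ℕ) (hS : S ≤ Tmax) :
    ∑ t ∈ Finset.Icc 1 S, ∑ i, (ls i - lam t i) * G t i ≤
      (∑ i, (ls i)^2) / (2*η) + η * M * S / 2 := by
  set Φ : ℕ → ℝ := fun t => ∑ i, (lam t i - ls i)^2 with hΦ
  have step : ∀ t, 1 ≤ t → t ≤ Tmax →
      Φ (t+1) ≤ Φ t + 2*η*(∑ i, (lam t i - ls i) * G t i) + η^2 * M := by
    intro t ht1 ht2
    have hco : ∀ i, (lam (t+1) i - ls i)^2 ≤
        (lam t i - ls i)^2 + 2*η*((lam t i - ls i) * G t i) + η^2 * 1 := by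
      intro i
      have h1 : (lam (t+1) i - ls i)^2 ≤ (lam t i + η * G t i - ls i)^2 := by
        rw [hupd t ht1 ht2 i]; exact sq_max_zero_le _ _ (hls i)
      have h2 : (G t i)^2 ≤ 1 := by
        have := hG t ht1 ht2 i
        nlinarith [abs_nonneg (G t i), sq_abs (G t i)]
      nlinarith [sq_nonneg η]
    calc Φ (t+1) ≤ ∑ i, ((lam t i - ls i)^2 + 2*η*((lam t i - ls i) * G t i) + η^2 * 1) :=
          Finset.sum_le_sum (fun i _ => hco i)
      _ = Φ t + 2*η*(∑ i, (lam t i - ls i) * G t i) + η^2 * M := by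
          simp [hΦ, Finset.sum_add_distrib, Finset.mul_sum]; ring
  have tele : ∀ S, S ≤ Tmax →
      Φ (S+1) ≤ Φ 1 + ∑ t ∈ Finset.Icc 1 S,
        (2*η*(∑ i, (lam t i - ls i) * G t i) + η^2 * M) := by
    intro S
    induction S with
    | zero => intro _; simp
    | succ S ih =>
      intro hS1
      have hSle : S ≤ Tmax := Nat.le_of_succ_le hS1
      rw [Finset.sum_Icc_succ_top (Nat.one_le_iff_ne_zero.mpr (Nat.succ_ne_zero S))]
      have := step (S+1) (Nat.succ_le_succ (Nat.zero_le S)) hS1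
      linarith [ih hSle]
  have h0 : Φ (S+1) ≥ 0 := Finset.sum_nonneg fun i _ => sq_nonneg _
  have h1 : Φ 1 = ∑ i, (ls i)^2 := by
    simp [hΦ, hlam1]
  have h2 := tele S hS
  rw [h1, Finset.sum_add_distrib, Finset.sum_const, ← Finset.mul_sum] at h2
  have hcard : (Finset.Icc 1 S).card = S := by simp
  rw [hcard] at h2
  have key : ∑ t ∈ Finset.Icc 1 S, ∑ i, (ls i - lam t i) * G t i =
      -∑ t ∈ Finset.Icc 1 S, ∑ i, (lam t i - ls i) * G t i := by
    rw [← Finset.sum_neg_distrib]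
    refine Finset.sum_congr rfl fun t _ => ?_
    rw [← Finset.sum_neg_distrib]
    exact Finset.sum_congr rfl fun i _ => by ring
  rw [key]
  simp only [nsmul_eq_mul] at h2
  set A := ∑ t ∈ Finset.Icc 1 S, ∑ i, (lam t i - ls i) * G t i with hA
  set Q := ∑ i, (ls i)^2 with hQ
  have h3 : 0 ≤ Q + 2*η*A + η^2*M*S := by
    have h0' : 0 ≤ Φ (S+1) := Finset.sum_nonneg fun i _ => sq_nonneg _
    nlinarith
  have h4 : -A ≤ (Q + η^2*M*S) / (2*η) := by
    rw [le_div_iff₀ (by linarith)]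
    nlinarith
  have h5 : (Q + η^2*M*S) / (2*η) = Q/(2*η) + η*M*S/2 := by
    field_simp
  linarith

set_option maxHeartbeats 1200000 in
/-- α-regret bound of Dual Gradient Descent in the adversarial setting
(Theorem `adv_reg` in the paper), against any feasible comparator sequence. -/
theorem adversarial_alpha_regret
    (m n T : ℕ) (hm : 1 ≤ m) (hn : 1 ≤ n) (hT : 1 ≤ T)
    (δ : ℝ) (hδ : δ ∈ Set.Ioo (0 : ℝ) 1)
    (β : Fin n → ℝ) (hβ : ∀ j, β j ∈ Set.Ioc (0 : ℝ) 1) (hβT : ∀ j, 1 ≤ β j * T)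
    (βmin : ℝ) (hβmin : IsLeast (Set.range β) βmin)
    (η : ℝ) (hη : η = 1 / (60 * (m + n) * Real.sqrt (2 * T * Real.log (T ^ 2 / δ))))
    {𝒳 : Type*} [Nonempty 𝒳] (void : 𝒳)
    (f : ℕ → 𝒳 → ℝ) (g : ℕ → 𝒳 → Fin m → ℝ) (h : ℕ → 𝒳 → Fin n → ℝ)
    (hf : ∀ t ∈ Finset.Icc 1 T, ∀ x, f t x ∈ Set.Icc (0 : ℝ) 1)
    (hgr : ∀ t ∈ Finset.Icc 1 T, ∀ x i, g t x i ∈ Set.Icc (-1 : ℝ) 1)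
    (hhr : ∀ t ∈ Finset.Icc 1 T, ∀ x j, h t x j ∈ Set.Icc (0 : ℝ) 1)
    (hvoidf : ∀ t ∈ Finset.Icc 1 T, f t void = 0)
    (hvoidg : ∀ t ∈ Finset.Icc 1 T, ∀ i, g t void i = 0)
    (hvoidh : ∀ t ∈ Finset.Icc 1 T, ∀ j, h t void j = 0)
    -- the unified constraint function
    (gt : ℕ → 𝒳 → Fin (m + n) → ℝ)
    (hgt1 : ∀ t x (i : Fin m), gt t x (Fin.castAdd n i) = g t x i)
    (hgt2 : ∀ t x (j : Fin n), gt t x (Fin.natAdd m j) = h t x j - β j)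
    -- the adversarial Slater condition
    (ρ : ℝ) (hρ : ρ ∈ Set.Ioc (0 : ℝ) 1)
    (x0 : ℕ → 𝒳)
    (hx0 : ∀ t ∈ Finset.Icc 1 T, ∀ i, gt t (x0 t) i ≤ -ρ)
    -- the Dual Gradient Descent algorithm
    (lam : ℕ → Fin (m + n) → ℝ) (hlam1 : ∀ i, lam 1 i = 0)
    (xhat x : ℕ → 𝒳)
    (hxhat : ∀ t ∈ Finset.Icc 1 T, ∀ y : 𝒳,
      f t y - ∑ i, lam t i * gt t y i ≤
        f t (xhat t) - ∑ i, lam t i * gt t (xhat t) i)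
    (hplay : ∀ t ∈ Finset.Icc 1 T,
      (∀ j, ∑ s ∈ Finset.Icc 1 (t - 1), h s (x s) j ≤ β j * T - 1) →
        x t = xhat t)
    (hstopped : ∀ t ∈ Finset.Icc 1 T,
      ¬(∀ j, ∑ s ∈ Finset.Icc 1 (t - 1), h s (x s) j ≤ β j * T - 1) →
        x t = void)
    (hupd : ∀ t ∈ Finset.Icc 1 T, ∀ i,
      lam (t + 1) i = max 0 (lam t i + η * gt t (x t) i))
    (α : ℝ) (hα : α = ρ / (1 + ρ))
    -- any feasible comparator sequence
    (z : ℕ → 𝒳)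
    (hzg : ∀ i, ∑ t ∈ Finset.Icc 1 T, g t (z t) i ≤ 0)
    (hzh : ∀ j, ∑ t ∈ Finset.Icc 1 T, h t (z t) j ≤ β j * T) :
    α * ∑ t ∈ Finset.Icc 1 T, f t (z t) - ∑ t ∈ Finset.Icc 1 T, f t (x t) ≤
      1 / βmin + (60 * (m + n) * Real.sqrt (2 * T * Real.log (T ^ 2 / δ))) / (2 * βmin ^ 2)
        + Real.sqrt T / (120 * Real.sqrt (2 * Real.log (T ^ 2 / δ))) := by
  -- basic positivity facts
  obtain ⟨hδ0, hδ1⟩ := hδ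
  have hT0 : (0:ℝ) < T := by exact_mod_cast hT
  have h1T : (1:ℝ) ≤ (T:ℝ) := by exact_mod_cast hT
  have hL : 0 < Real.log (T^2/δ) := by
    apply Real.log_pos
    rw [lt_div_iff₀ hδ0]
    nlinarith [h1T, hδ1]
  have hsT : 0 < Real.sqrt T := Real.sqrt_pos.mpr hT0
  have hs2L : 0 < Real.sqrt (2 * Real.log (T^2/δ)) := Real.sqrt_pos.mpr (by linarith)
  have hsTL : 0 < Real.sqrt (2 * T * Real.log (T^2/δ)) :=
    Real.sqrt_pos.mpr (by positivity)
  have hM0 : (0:ℝ) < (m:ℝ) + n := by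
    have : (1:ℝ) ≤ (m:ℝ) := by exact_mod_cast hm
    have : (0:ℝ) ≤ (n:ℝ) := Nat.cast_nonneg n
    linarith
  have hηpos : 0 < η := by rw [hη]; positivity
  -- split of sqrt
  have hsqrt_split : Real.sqrt (2 * T * Real.log (T^2/δ)) =
      Real.sqrt T * Real.sqrt (2 * Real.log (T^2/δ)) := by
    rw [show (2 * (T:ℝ) * Real.log (T^2/δ)) = (T:ℝ) * (2 * Real.log (T^2/δ)) by ring,
      Real.sqrt_mul (le_of_lt hT0)]
  have hTss : ((T:ℝ)) = Real.sqrt T * Real.sqrt T := (Real.mul_self_sqrt (le_of_lt hT0)).symm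
  -- third term identity : η * (m+n) * T / 2 = √T / (120 √(2L))
  have hMne : ((m:ℝ)+n) ≠ 0 := ne_of_gt hM0
  have hsne : Real.sqrt (2 * T * Real.log (T^2/δ)) ≠ 0 := ne_of_gt hsTL
  have hthird : η * ((m:ℝ)+n) * T / 2 =
      Real.sqrt T / (120 * Real.sqrt (2 * Real.log (T^2/δ))) := by
    have e1 : η * ((m:ℝ)+n) * T / 2 = (T:ℝ) / (120 * Real.sqrt (2 * T * Real.log (T^2/δ))) := by
      rw [hη]; field_simp [hMne, hsne]; ring
    rw [e1, hsqrt_split, div_eq_div_iff (by positivity) (by positivity)]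
    linear_combination (120 * Real.sqrt (2 * Real.log ((T:ℝ)^2/δ))) * hTss
  -- second term identity : 1/(2η) = 60 (m+n) √(2TL) / 2
  have hsecond : 1 / (2*η) = (60 * ((m:ℝ)+n) * Real.sqrt (2 * T * Real.log (T^2/δ))) / 2 := by
    rw [hη]
    field_simp
  -- βmin facts
  obtain ⟨j0, hj0⟩ := hβmin.1
  have hβmin_pos : 0 < βmin := by rw [← hj0]; exact (hβ j0).1
  have hβmin_le : ∀ j, βmin ≤ β j := fun j => hβmin.2 ⟨j, rfl⟩
  -- λ is nonnegative
  have hlamnn : ∀ t, 1 ≤ t → t ≤ T + 1 → ∀ i, 0 ≤ lam t i := by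
    intro t
    induction t with
    | zero => intro h1; exact absurd h1 (by omega)
    | succ t ih =>
      intro h1 h2 i
      rcases Nat.eq_zero_or_pos t with rfl | ht
      · rw [hlam1]
      · have htT : t ≤ T := by omega
        rw [hupd t (Finset.mem_Icc.mpr ⟨ht, htT⟩) i]
        exact le_max_left 0 _
  -- bound on unified constraints
  have hgtb : ∀ t ∈ Finset.Icc 1 T, ∀ y i, |gt t y i| ≤ 1 := by
    intro t ht y i
    refine Fin.addCases (fun i' => ?_) (fun j' => ?_) i
    · rw [hgt1]
      have := hgr t ht y i'
      rw [abs_le]; exact ⟨this.1, this.2⟩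
    · rw [hgt2]
      have h1 := hhr t ht y j'
      have h2 := hβ j'
      rw [abs_le]
      constructor
      · linarith [h1.1, h2.2]
      · linarith [h1.2, h2.1]
  -- the per-round Lagrangian inequality
  have hper : ∀ t ∈ Finset.Icc 1 T, x t = xhat t →
      α * f t (z t) ≤ f t (x t) - ∑ i, lam t i * gt t (x t) i := by
    intro t ht hx
    rw [hx]
    have ht1 : 1 ≤ t := (Finset.mem_Icc.mp ht).1
    have ht2 : t ≤ T := (Finset.mem_Icc.mp ht).2
    have hlnn : ∀ i, 0 ≤ lam t i := hlamnn t ht1 (by omega)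
    obtain ⟨L, hL'⟩ : ∃ L, L = f t (xhat t) - ∑ i, lam t i * gt t (xhat t) i := ⟨_, rfl⟩
    obtain ⟨S, hS'⟩ : ∃ S, S = ∑ i, lam t i := ⟨_, rfl⟩
    rw [← hL']
    have hS0 : 0 ≤ S := hS' ▸ Finset.sum_nonneg fun i _ => hlnn i
    have h1 : ρ * S ≤ L := by
      have hcmp := hxhat t ht (x0 t)
      rw [← hL'] at hcmp
      have hf0 : 0 ≤ f t (x0 t) := (hf t ht (x0 t)).1
      have hterm : ∑ i, lam t i * gt t (x0 t) i ≤ S * (-ρ) := by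
        rw [hS', Finset.sum_mul]
        exact Finset.sum_le_sum fun i _ => mul_le_mul_of_nonneg_left (hx0 t ht i) (hlnn i)
      linarith
    have h2 : f t (z t) - S ≤ L := by
      have hcmp := hxhat t ht (z t)
      rw [← hL'] at hcmp
      have hterm : ∑ i, lam t i * gt t (z t) i ≤ S := by
        rw [hS']
        apply Finset.sum_le_sum
        intro i _
        have habs := (abs_le.mp (hgtb t ht (z t) i)).2
        nlinarith [hlnn i]
      linarith
    have hf0 : 0 ≤ f t (z t) := (hf t ht (z t)).1
    have hα0 : 0 ≤ α := by
      rw [hα]; exact div_nonneg hρ.1.le (by linarith [hρ.1])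
    have hα1 : α ≤ 1 := by
      rw [hα, div_le_one (by linarith [hρ.1])]; linarith [hρ.1]
    have h1ρ : (1:ℝ) + ρ ≠ 0 := by nlinarith [hρ.1]
    have hαval : α * (1 + ρ) = ρ := by
      rw [hα, div_mul_cancel₀ _ h1ρ]
    have fact1 : (1-α) * (ρ * S) ≤ (1-α) * L :=
      mul_le_mul_of_nonneg_left h1 (sub_nonneg.mpr hα1)
    have fact2 : α * (f t (z t) - S) ≤ α * L :=
      mul_le_mul_of_nonneg_left h2 hα0
    have h6 : S*α + S*(α*ρ) - S*ρ = 0 := by linear_combination S * hαval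
    linarith [fact1, fact2, h6]
  -- OGD regret bound specialised
  have hogd : ∀ (ls : Fin (m+n) → ℝ), (∀ i, 0 ≤ ls i) → ∀ S ≤ T,
      ∑ t ∈ Finset.Icc 1 S, ∑ i, (ls i - lam t i) * gt t (x t) i ≤
        (∑ i, (ls i)^2) / (2*η) + η * (m+n) * S / 2 := by
    intro ls hls S hS
    have := ogd_bound (m+n) T η hηpos lam (fun t => gt t (x t)) hlam1
      (fun t h1 h2 i => hupd t (Finset.mem_Icc.mpr ⟨h1, h2⟩) i)
      (fun t h1 h2 i => hgtb t (Finset.mem_Icc.mpr ⟨h1, h2⟩) (x t) i)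
      ls hls S hS
    convert this using 3
    push_cast
    ring
  -- global facts about α
  have hα0g : 0 ≤ α := by
    rw [hα]; exact div_nonneg hρ.1.le (by linarith [hρ.1])
  have hα1g : α ≤ 1 := by
    rw [hα, div_le_one (by linarith [hρ.1])]; linarith [hρ.1]
  have hRHS1 : 0 ≤ 1 / βmin := by positivity
  have hRHS2 : 0 ≤ (60 * ((m:ℝ) + n) * Real.sqrt (2 * T * Real.log (T ^ 2 / δ))) / (2 * βmin ^ 2) := by
    positivity
  classical
  by_cases hall : ∀ t ∈ Finset.Icc 1 T, ∀ j, ∑ s ∈ Finset.Icc 1 (t - 1), h s (x s) j ≤ β j * T - 1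
  · -- the algorithm never stops
    have hxx : ∀ t ∈ Finset.Icc 1 T, x t = xhat t := fun t ht => hplay t ht (hall t ht)
    have hsum1 : α * ∑ t ∈ Finset.Icc 1 T, f t (z t) ≤
        ∑ t ∈ Finset.Icc 1 T, f t (x t)
          - ∑ t ∈ Finset.Icc 1 T, ∑ i, lam t i * gt t (x t) i := by
      rw [Finset.mul_sum, ← Finset.sum_sub_distrib]
      exact Finset.sum_le_sum fun t ht => hper t ht (hxx t ht)
    have hogd0 := hogd (fun _ => (0:ℝ)) (fun _ => le_refl 0) T le_rfl
    have e : ∑ t ∈ Finset.Icc 1 T, ∑ i, ((0:ℝ) - lam t i) * gt t (x t) i =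
        - ∑ t ∈ Finset.Icc 1 T, ∑ i, lam t i * gt t (x t) i := by
      rw [← Finset.sum_neg_distrib]
      refine Finset.sum_congr rfl fun t _ => ?_
      rw [← Finset.sum_neg_distrib]
      exact Finset.sum_congr rfl fun i _ => by ring
    rw [e] at hogd0
    have ez : (∑ _i : Fin (m+n), ((0:ℝ))^2) = 0 := by simp
    rw [ez] at hogd0
    rw [zero_div, zero_add] at hogd0
    have hend : - ∑ t ∈ Finset.Icc 1 T, ∑ i, lam t i * gt t (x t) i ≤
        η * ((m:ℝ)+n) * T / 2 := by
      push_cast at hogd0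
      linarith [hogd0]
    rw [hthird] at hend
    linarith [hsum1, hend, hRHS1, hRHS2]
  · -- the algorithm stops at some round
    push_neg at hall
    have hP : ∃ τ, 1 ≤ τ ∧ τ ≤ T ∧
        ∃ j, β j * T - 1 < ∑ s ∈ Finset.Icc 1 (τ - 1), h s (x s) j := by
      obtain ⟨t₀, ht₀, j₀, hj₀⟩ := hall
      exact ⟨t₀, (Finset.mem_Icc.mp ht₀).1, (Finset.mem_Icc.mp ht₀).2, j₀, hj₀⟩
    set τ := Nat.find hP with hτdef
    obtain ⟨hτ1, hτT, jv, hjv⟩ := Nat.find_spec hP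
    have hplayed : ∀ t, 1 ≤ t → t ≤ τ - 1 → x t = xhat t := by
      intro t h1t htτ
      have htlt : t < τ := by omega
      have hmin := Nat.find_min hP htlt
      have htT : t ≤ T := by omega
      apply hplay t (Finset.mem_Icc.mpr ⟨h1t, htT⟩)
      intro j
      by_contra hc
      push_neg at hc
      exact hmin ⟨h1t, htT, j, hc⟩
    have hnotok : ∀ t, τ ≤ t → t ≤ T →
        ∃ j, β j * T - 1 < ∑ s ∈ Finset.Icc 1 (t - 1), h s (x s) j := by
      intro t htτ
      induction t, htτ using Nat.le_induction with
      | base => intro _; exact ⟨jv, hjv⟩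
      | succ t ht ih =>
        intro ht1T
        have htT : t ≤ T := by omega
        obtain ⟨j, hj⟩ := ih htT
        refine ⟨j, ?_⟩
        obtain ⟨u, rfl⟩ : ∃ u, t = u + 1 := ⟨t - 1, by omega⟩
        have hstep : ∑ s ∈ Finset.Icc 1 (u + 1), h s (x s) j =
            ∑ s ∈ Finset.Icc 1 u, h s (x s) j + h (u+1) (x (u+1)) j :=
          Finset.sum_Icc_succ_top (by omega) _
        have hnn : 0 ≤ h (u+1) (x (u+1)) j :=
          (hhr (u+1) (Finset.mem_Icc.mpr ⟨by omega, by omega⟩) (x (u+1)) j).1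
        simp only [Nat.add_sub_cancel] at hj ⊢
        rw [hstep]
        linarith
    have hvoidx : ∀ t, τ ≤ t → t ≤ T → x t = void := by
      intro t h1 h2
      apply hstopped t (Finset.mem_Icc.mpr ⟨by omega, h2⟩)
      intro hok
      obtain ⟨j, hj⟩ := hnotok t h1 h2
      exact absurd (hok j) (not_le.mpr hj)
    -- splitting sums at τ
    have hsplit : ∀ F : ℕ → ℝ, ∑ t ∈ Finset.Icc 1 T, F t =
        ∑ t ∈ Finset.Icc 1 (τ - 1), F t + ∑ t ∈ Finset.Icc τ T, F t := by
      intro F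
      have h01 : Finset.Icc 1 (τ-1) = Finset.Ioc 0 (τ-1) := by rw [← Finset.Icc_add_one_left_eq_Ioc]; rfl
      have h02 : Finset.Icc 1 T = Finset.Ioc 0 T := by rw [← Finset.Icc_add_one_left_eq_Ioc]; rfl
      have h03 : Finset.Icc τ T = Finset.Ioc (τ-1) T := by
        rw [← Finset.Icc_add_one_left_eq_Ioc]; congr 1; omega
      rw [h01, h02, h03, Finset.sum_Ioc_consecutive _ (by omega) (by omega)]
    -- the dual comparator
    have hbv : 0 < β jv := (hβ jv).1
    set c : Fin (m+n) := Fin.natAdd m jv with hcdef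
    set ls : Fin (m+n) → ℝ := fun i => if i = c then 1 / β jv else 0 with hlsdef
    have hls : ∀ i, 0 ≤ ls i := by
      intro i
      by_cases hi : i = c <;> simp [hlsdef, hi]
      positivity
    have hlssq : ∑ i, (ls i)^2 = (1 / β jv)^2 := by
      have e : ∀ i : Fin (m+n), (ls i)^2 = if i = c then (1 / β jv)^2 else 0 := by
        intro i; by_cases hi : i = c <;> simp [hlsdef, hi]
      rw [Finset.sum_congr rfl fun i _ => e i, Finset.sum_ite_eq' Finset.univ c]
      simp
    have hlsdot : ∀ t, ∑ i, ls i * gt t (x t) i = (1 / β jv) * (h t (x t) jv - β jv) := by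
      intro t
      have e : ∀ i : Fin (m+n), ls i * gt t (x t) i =
          if i = c then (1 / β jv) * gt t (x t) c else 0 := by
        intro i
        by_cases hi : i = c
        · subst hi; simp [hlsdef]
        · simp [hlsdef, hi]
      rw [Finset.sum_congr rfl fun i _ => e i, Finset.sum_ite_eq' Finset.univ c]
      simp [hcdef, hgt2]
    -- OGD regret with this comparator over the first τ - 1 rounds
    have hogd2 := hogd ls hls (τ - 1) (by omega)
    rw [hlssq] at hogd2
    have esub : ∑ t ∈ Finset.Icc 1 (τ-1), ∑ i, (ls i - lam t i) * gt t (x t) i =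
        ∑ t ∈ Finset.Icc 1 (τ-1), ∑ i, ls i * gt t (x t) i
          - ∑ t ∈ Finset.Icc 1 (τ-1), ∑ i, lam t i * gt t (x t) i := by
      rw [← Finset.sum_sub_distrib]
      refine Finset.sum_congr rfl fun t _ => ?_
      rw [← Finset.sum_sub_distrib]
      exact Finset.sum_congr rfl fun i _ => by ring
    rw [esub] at hogd2
    -- lower bound on the comparator's cumulative constraint value
    have hcard : ((Finset.Icc 1 (τ-1)).card : ℝ) = ((τ-1 : ℕ) : ℝ) := by simp
    have hlow : (T:ℝ) - ((τ-1 : ℕ):ℝ) - 1 / β jv ≤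
        ∑ t ∈ Finset.Icc 1 (τ-1), ∑ i, ls i * gt t (x t) i := by
      have e : ∑ t ∈ Finset.Icc 1 (τ-1), ∑ i, ls i * gt t (x t) i =
          (1 / β jv) * (∑ t ∈ Finset.Icc 1 (τ-1), h t (x t) jv)
            - ((τ-1 : ℕ):ℝ) * ((1 / β jv) * β jv) := by
        rw [Finset.sum_congr rfl fun t _ => hlsdot t]
        rw [show ∀ W : ℕ → ℝ, ∑ t ∈ Finset.Icc 1 (τ-1), (1 / β jv) * (W t - β jv) =
            ∑ t ∈ Finset.Icc 1 (τ-1), ((1 / β jv) * W t - (1 / β jv) * β jv) from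
          fun W => Finset.sum_congr rfl fun t _ => by ring]
        rw [Finset.sum_sub_distrib, Finset.sum_const, ← Finset.mul_sum]
        rw [nsmul_eq_mul, hcard]
      rw [e]
      have h1b : (1 / β jv) * β jv = 1 := by field_simp
      have hmul : (1 / β jv) * (β jv * T - 1) ≤
          (1 / β jv) * (∑ t ∈ Finset.Icc 1 (τ-1), h t (x t) jv) :=
        mul_le_mul_of_nonneg_left hjv.le (by positivity)
      have e2 : (1 / β jv) * (β jv * T - 1) = (T:ℝ) - 1 / β jv := by field_simp
      rw [e2] at hmul
      rw [h1b]
      linarith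
    -- per-round inequality over the played rounds
    have hsum1 : α * ∑ t ∈ Finset.Icc 1 (τ-1), f t (z t) ≤
        ∑ t ∈ Finset.Icc 1 (τ-1), f t (x t)
          - ∑ t ∈ Finset.Icc 1 (τ-1), ∑ i, lam t i * gt t (x t) i := by
      rw [Finset.mul_sum, ← Finset.sum_sub_distrib]
      apply Finset.sum_le_sum
      intro t ht'
      have ht'' := Finset.mem_Icc.mp ht'
      have htT : t ≤ T := by omega
      exact hper t (Finset.mem_Icc.mpr ⟨ht''.1, htT⟩) (hplayed t ht''.1 ht''.2)
    -- tail sums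
    have htailf : ∑ t ∈ Finset.Icc τ T, f t (x t) = 0 := by
      apply Finset.sum_eq_zero
      intro t ht'
      have ht'' := Finset.mem_Icc.mp ht'
      rw [hvoidx t ht''.1 ht''.2]
      exact hvoidf t (Finset.mem_Icc.mpr ⟨by omega, ht''.2⟩)
    have hcardtail : ((Finset.Icc τ T).card : ℝ) = (T:ℝ) - ((τ-1 : ℕ):ℝ) := by
      rw [Nat.card_Icc, Nat.cast_sub (by omega), Nat.cast_sub (by omega)]
      push_cast
      ring
    have htailz : ∑ t ∈ Finset.Icc τ T, f t (z t) ≤ (T:ℝ) - ((τ-1 : ℕ):ℝ) := by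
      calc ∑ t ∈ Finset.Icc τ T, f t (z t) ≤ ∑ _t ∈ Finset.Icc τ T, (1:ℝ) := by
            apply Finset.sum_le_sum
            intro t ht'
            have ht'' := Finset.mem_Icc.mp ht'
            exact (hf t (Finset.mem_Icc.mpr ⟨by omega, ht''.2⟩) (z t)).2
        _ = (T:ℝ) - ((τ-1 : ℕ):ℝ) := by rw [Finset.sum_const, nsmul_eq_mul, mul_one, hcardtail]
    have hTk : ((τ-1 : ℕ):ℝ) ≤ (T:ℝ) := by exact_mod_cast (by omega : τ - 1 ≤ T)
    -- put everything together
    have hz1 : α * ∑ t ∈ Finset.Icc 1 T, f t (z t) =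
        α * ∑ t ∈ Finset.Icc 1 (τ-1), f t (z t) + α * ∑ t ∈ Finset.Icc τ T, f t (z t) := by
      rw [hsplit (fun t => f t (z t))]; ring
    have hx1 : ∑ t ∈ Finset.Icc 1 T, f t (x t) = ∑ t ∈ Finset.Icc 1 (τ-1), f t (x t) := by
      rw [hsplit (fun t => f t (x t)), htailf, add_zero]
    have hmono2 : η * ((m:ℝ)+n) * ((τ-1:ℕ):ℝ) / 2 ≤ η * ((m:ℝ)+n) * T / 2 := by
      have : 0 ≤ η * ((m:ℝ)+n) := by positivity
      nlinarith
    have hbmin : 1 / β jv ≤ 1 / βmin :=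
      one_div_le_one_div_of_le hβmin_pos (hβmin_le jv)
    have hsq : (1 / β jv)^2 ≤ (1 / βmin)^2 := by
      have h0 : 0 ≤ 1 / β jv := by positivity
      nlinarith
    have h2η : 0 < 1 / (2*η) := by positivity
    have hterm2 : (1 / β jv)^2 / (2*η) ≤
        (60 * ((m:ℝ) + n) * Real.sqrt (2 * T * Real.log (T ^ 2 / δ))) / (2 * βmin ^ 2) := by
      have e : (1 / βmin)^2 / (2*η) =
          (60 * ((m:ℝ) + n) * Real.sqrt (2 * T * Real.log (T ^ 2 / δ))) / (2 * βmin ^ 2) := by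
        have e' : (1 / βmin)^2 / (2*η) = (1 / (2*η)) * (1 / βmin^2) := by ring
        rw [e', hsecond]
        field_simp
      rw [← e]
      apply div_le_div_of_nonneg_right ?_ (by positivity)
      exact hsq
    have hαtail : α * ∑ t ∈ Finset.Icc τ T, f t (z t) ≤ (T:ℝ) - ((τ-1 : ℕ):ℝ) := by
      calc α * ∑ t ∈ Finset.Icc τ T, f t (z t) ≤ 1 * ((T:ℝ) - ((τ-1 : ℕ):ℝ)) := by
            apply mul_le_mul hα1g htailz ?_ (by norm_num)
            · apply Finset.sum_nonneg
              intro t ht'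
              have ht'' := Finset.mem_Icc.mp ht'
              exact (hf t (Finset.mem_Icc.mpr ⟨by omega, ht''.2⟩) (z t)).1
        _ = (T:ℝ) - ((τ-1 : ℕ):ℝ) := one_mul _
    -- hogd2 : (∑ ls·g) - (∑ λ·g) ≤ (1/βjv)^2/(2η) + η(m+n)(τ-1)/2
    push_cast at hogd2
    rw [hz1, hx1]
    rw [hthird] at hmono2
    linarith [hogd2, hlow, hsum1, hαtail, hbmin, hterm2, hmono2,
      one_div_le_one_div_of_le hβmin_pos (hβmin_le jv)]
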